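/- For every t ∈ (0,1), every a ∈ (0,1), and every real y with a(1−t) < |y| < π: |f(t·e^{iy})| / f(t) ≤ exp( −2t(t+1) / ((1−t)·(π²/a² + 4t)) ). -/

import Mathlib

open Real

private lemma stmt19_factor_log (r θ : ℝ) (hr0 : 0 ≤ r) (hr1 : r < 1) :
    Real.log (1 - r) + r * (1 - Real.cos θ) ≤
      Real.log ‖1 - (r : ℂ) * Complex.exp ((θ : ℂ) * Complex.I)‖ := by
  set v : ℂ := (r : ℂ) * Complex.exp ((θ : ℂ) * Complex.I) with hv_def
  have hnv : ‖v‖ = r := by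
    simp [hv_def, Complex.norm_exp,
      abs_of_nonneg hr0]
  have hv1 : ‖v‖ < 1 := by rw [hnv]; exact hr1
  have h1 : HasSum (fun n : ℕ ↦ v ^ n / n) (-Complex.log (1 - v)) :=
    Complex.hasSum_taylorSeries_neg_log hv1
  have hre : ∀ n : ℕ, (v ^ n / n).re = r ^ n / n * Real.cos (n * θ) := by
    intro n
    have : v ^ n = ((r ^ n : ℝ) : ℂ) * Complex.exp (((n * θ : ℝ) : ℂ) * Complex.I) := by
      rw [hv_def, mul_pow, ← Complex.exp_nat_mul]
      push_cast
      ring_nf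
    rw [this]
    rw [show ((r ^ n : ℝ) : ℂ) * Complex.exp (((n * θ : ℝ) : ℂ) * Complex.I) / (n : ℂ)
        = ((r ^ n / n : ℝ) : ℂ) * Complex.exp (((n * θ : ℝ) : ℂ) * Complex.I) by
      push_cast; ring]
    rw [Complex.re_ofReal_mul, Complex.exp_ofReal_mul_I_re]
  have h1r : HasSum (fun n : ℕ ↦ r ^ n / n * Real.cos (n * θ))
      (-Real.log ‖1 - v‖) := by
    have := Complex.hasSum_re h1
    simp only [hre] at this
    simpa [Complex.log_re] using this
  have h2 : HasSum (fun n : ℕ ↦ r ^ n / n) (-Real.log (1 - r)) := by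
    have hr1' : ‖(r : ℂ)‖ < 1 := by
      simpa [abs_of_nonneg hr0] using hr1
    have h := Complex.hasSum_re (Complex.hasSum_taylorSeries_neg_log hr1')
    have e1 : ∀ n : ℕ, (((r : ℂ)) ^ n / (n : ℂ)).re = r ^ n / n := by
      intro n
      rw [show ((r : ℂ)) ^ n / (n : ℂ) = ((r ^ n / n : ℝ) : ℂ) by push_cast; ring]
      exact Complex.ofReal_re _
    simp only [e1] at h
    have e2 : (-Complex.log (1 - (r : ℂ))).re = -Real.log (1 - r) := by
      simp [Complex.log_re]
      rw [show (1 : ℂ) - (r : ℂ) = ((1 - r : ℝ) : ℂ) by push_cast; ring]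
      rw [Complex.norm_real, Real.norm_eq_abs, abs_of_nonneg (by linarith)]
    rwa [e2] at h
  have h3 := h2.sub h1r
  have key := le_hasSum h3 1 ?_
  · simp at key
    have habs : Real.log (1 - r) + (r - r * Real.cos θ) ≤ Real.log ‖1 - v‖ := by
      linarith
    linarith [habs]
  · intro n hn
    have hc : Real.cos (n * θ) ≤ 1 := Real.cos_le_one _
    have : 0 ≤ r ^ n / n := by positivity
    nlinarith [this, hc]

private lemma stmt19_sumLr (t : ℝ) (ht0 : 0 < t) (ht1 : t < 1) :
    Summable (fun j : ℕ ↦ Real.log (1 / (1 - t ^ (j + 1)))) := by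
  have hb : ∀ j : ℕ, 0 < 1 - t ^ (j+1) := by
    intro j
    have h1 : t ^ (j+1) ≤ t := pow_le_of_le_one ht0.le ht1.le (Nat.succ_ne_zero j)
    linarith
  refine Summable.of_nonneg_of_le (fun j ↦ Real.log_nonneg ?_) (fun j ↦ ?_)
    (((summable_geometric_of_lt_one ht0.le ht1).mul_left ((1-t)⁻¹ * t)).congr
      (fun j ↦ by ring : ∀ j : ℕ, (1-t)⁻¹ * t * t ^ j = (1-t)⁻¹ * t ^ (j+1)))
  · rw [le_div_iff₀ (hb j)]
    have h0 : (0:ℝ) ≤ t ^ (j+1) := by positivity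
    linarith [hb j]
  · have hx : t ^ (j+1) ≤ t := pow_le_of_le_one ht0.le ht1.le (Nat.succ_ne_zero j)
    have h1 := hb j
    have hle := Real.log_le_sub_one_of_pos (show (0:ℝ) < 1 / (1 - t^(j+1)) by positivity)
    have he : 1 / (1 - t^(j+1)) - 1 = t^(j+1) / (1 - t^(j+1)) := by field_simp; ring
    rw [he] at hle
    refine hle.trans ?_
    rw [div_le_iff₀ h1]
    have h2 : (1-t)⁻¹ * t^(j+1) * (1 - t^(j+1)) = t^(j+1) * ((1 - t^(j+1)) / (1-t)) := by
      field_simp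
    rw [h2]
    have h3 : 1 ≤ (1 - t^(j+1)) / (1-t) := by
      rw [le_div_iff₀ (by linarith)]
      linarith
    nlinarith [pow_pos ht0 (j+1)]

private lemma stmt19_alg (t a y : ℝ) (ht0 : 0 < t) (ht1 : t < 1) (ha0 : 0 < a) (ha1 : a < 1)
    (hy1 : a * (1 - t) < |y|) (hy2 : |y| < Real.pi) :
    (2 * t * (t + 1)) / ((1 - t) * (Real.pi ^ 2 / a ^ 2 + 4 * t)) ≤
      t * (1 - t)⁻¹ - (t * Real.cos y - t ^ 2) / (1 - 2 * t * Real.cos y + t ^ 2) := by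
  have hpi := Real.pi_pos
  set c := Real.cos y with hc_def
  set K : ℝ := 1 - 2 * t * c + t ^ 2 with hK_def
  have hc1 : c ≤ 1 := Real.cos_le_one y
  have hKpos : 0 < K := by nlinarith
  have h1t : 0 < 1 - t := by linarith
  have hcos : 2 * a^2 * (1-t)^2 / Real.pi^2 ≤ 1 - c := by
    have h2 : 1 - c = 2 * Real.sin (y/2)^2 := by
      have h := Real.sin_sq_eq_half_sub (y/2)
      rw [show 2*(y/2) = y by ring] at h
      rw [hc_def]; linarith
    have h3 : Real.sin (y/2)^2 = Real.sin (|y|/2)^2 := by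
      rcases abs_cases y with ⟨h, _⟩ | ⟨h, _⟩
      · rw [h]
      · rw [h, show -y/2 = -(y/2) by ring, Real.sin_neg]; ring
    have h4 : |y|/Real.pi ≤ Real.sin (|y|/2) := by
      have := Real.mul_le_sin (x := |y|/2) (by positivity) (by linarith)
      calc |y|/Real.pi = 2/Real.pi * (|y|/2) := by field_simp
        _ ≤ _ := this
    have h5 : a * (1-t) ≤ |y| := hy1.le
    have h6 : (a*(1-t)/Real.pi)^2 ≤ (|y|/Real.pi)^2 := by
      have : 0 ≤ a*(1-t)/Real.pi := by positivity
      gcongr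
    have h7 : (|y|/Real.pi)^2 ≤ Real.sin (|y|/2)^2 := by
      have h0 : 0 ≤ |y|/Real.pi := by positivity
      nlinarith
    have heq : (a*(1-t)/Real.pi)^2 = a^2*(1-t)^2/Real.pi^2 := by field_simp
    have h8 : a^2*(1-t)^2/Real.pi^2 ≤ Real.sin (|y|/2)^2 := by
      rw [← heq]; exact h6.trans h7
    rw [h2, h3, show 2 * a^2 * (1-t)^2 / Real.pi^2 = 2*(a^2*(1-t)^2/Real.pi^2) from by ring]
    linarith
  have hX : 0 < Real.pi^2/a^2 + 4*t := by positivity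
  have hA : 2 * K ≤ (1 - c) * (Real.pi^2/a^2 + 4*t) := by
    have hpi2 : (2 * a^2 * (1-t)^2 / Real.pi^2) * (Real.pi^2/a^2) = 2*(1-t)^2 := by
      field_simp
    have h8 : 2*(1-t)^2 ≤ (1-c) * (Real.pi^2/a^2) := by
      rw [← hpi2]
      have : 0 < Real.pi^2/a^2 := by positivity
      exact mul_le_mul_of_nonneg_right hcos this.le
    have h9 : 4*t*(1-c) = (1-c)*(4*t) := by ring
    nlinarith
  have hid : t * (1 - t)⁻¹ - (t * c - t ^ 2) / K = t*(1+t)*(1-c) / ((1-t)*K) := by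
    field_simp
    ring
  rw [hid]
  rw [div_le_div_iff₀ (by positivity) (by positivity)]
  nlinarith [mul_le_mul_of_nonneg_left hA (show 0 ≤ t*(1+t)*(1-t) by nlinarith)]

/-- Euler's generating function `f(t) = ∏_{j≥1} 1/(1−t^j)`. -/
noncomputable def partitionGF (t : ℝ) : ℝ := ∏' j : ℕ, 1 / (1 - t ^ (j + 1))

/-- Euler's generating function on the complex unit disc. -/
noncomputable def partitionGFC (z : ℂ) : ℂ := ∏' j : ℕ, 1 / (1 - z ^ (j + 1))

/-- Estimate for `|f(t·e^{iy})|/f(t)` when `a(1−t) < |y| < π`. -/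
theorem stmt19 (t a : ℝ) (ht : t ∈ Set.Ioo (0 : ℝ) 1) (ha : a ∈ Set.Ioo (0 : ℝ) 1)
    (y : ℝ) (hy1 : a * (1 - t) < |y|) (hy2 : |y| < Real.pi) :
    ‖partitionGFC ((t : ℂ) * Complex.exp (Complex.I * (y : ℂ)))‖ / partitionGF t ≤
      Real.exp (-(2 * t * (t + 1)) / ((1 - t) * (Real.pi ^ 2 / a ^ 2 + 4 * t))) := by
  obtain ⟨ht0, ht1⟩ := ht
  obtain ⟨ha0, ha1⟩ := ha
  set w : ℂ := (t : ℂ) * Complex.exp (Complex.I * (y : ℂ)) with hw_def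
  have hwexp : Complex.exp (Complex.I * (y : ℂ)) = Complex.exp ((y:ℂ) * Complex.I) := by
    rw [mul_comm]
  have hware : w.re = t * Real.cos y := by
    rw [hw_def, hwexp, Complex.re_ofReal_mul, Complex.exp_ofReal_mul_I_re]
  have hwaim : w.im = t * Real.sin y := by
    rw [hw_def, hwexp, Complex.im_ofReal_mul, Complex.exp_ofReal_mul_I_im]
  have hnw : ‖w‖ = t := by
    rw [hw_def, norm_mul]
    simp [Complex.norm_exp, abs_of_nonneg ht0.le]
  have hw1 : ‖w‖ < 1 := by rw [hnw]; exact ht1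
  have hwj : ∀ j : ℕ, w ^ (j+1) =
      ((t ^ (j+1) : ℝ) : ℂ) * Complex.exp (((((j:ℝ)+1) * y : ℝ) : ℂ) * Complex.I) := by
    intro j
    rw [hw_def, mul_pow, ← Complex.exp_nat_mul]
    push_cast
    ring_nf
  have hnwj : ∀ j : ℕ, ‖w ^ (j+1)‖ = t ^ (j+1) := by
    intro j
    rw [norm_pow, hw_def, norm_mul]
    simp [Complex.norm_exp, abs_of_nonneg ht0.le]
  have hwre : ∀ j : ℕ, (w ^ (j+1)).re = t^(j+1) * Real.cos (((j:ℝ)+1) * y) := by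
    intro j
    rw [hwj j, Complex.re_ofReal_mul, Complex.exp_ofReal_mul_I_re]
  have hb : ∀ j : ℕ, 0 < 1 - t ^ (j+1) := by
    intro j
    have h1 : t ^ (j+1) ≤ t := pow_le_of_le_one ht0.le ht1.le (Nat.succ_ne_zero j)
    linarith
  have hwj1 : ∀ j : ℕ, (1 : ℂ) - w ^ (j+1) ≠ 0 := by
    intro j h
    have : ‖w ^ (j+1)‖ = 1 := by
      rw [show w ^ (j+1) = 1 by linear_combination -h]; simp
    rw [hnwj j] at this
    linarith [hb j]
  -- summability of the complex logs
  have hLc : Summable (fun j : ℕ ↦ Complex.log (1 / (1 - w ^ (j+1)))) := by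
    have hgeo : Summable (fun j : ℕ ↦ (1 + (1 - t)⁻¹ / 2) * t ^ (j+1)) :=
      ((summable_geometric_of_lt_one ht0.le ht1).mul_left ((1 + (1 - t)⁻¹ / 2) * t)).congr
        (fun j ↦ by ring)
    refine Summable.of_norm_bounded hgeo (fun j ↦ ?_)
    have hvlt : ‖w ^ (j+1)‖ < 1 := by rw [hnwj j]; linarith [hb j]
    have hbd := Complex.norm_log_one_sub_inv_sub_self_le hvlt
    have h1 : ‖Complex.log (1 - w^(j+1))⁻¹‖ ≤ ‖w^(j+1)‖ + ‖w^(j+1)‖^2 * (1-‖w^(j+1)‖)⁻¹/2 := by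
      calc ‖Complex.log (1 - w^(j+1))⁻¹‖
          = ‖w^(j+1) + (Complex.log (1 - w^(j+1))⁻¹ - w^(j+1))‖ := by ring_nf
        _ ≤ ‖w^(j+1)‖ + ‖Complex.log (1 - w^(j+1))⁻¹ - w^(j+1)‖ := norm_add_le _ _
        _ ≤ _ := by linarith [hbd]
    rw [one_div]
    refine h1.trans ?_
    rw [hnwj j]
    have e1 : (1 - t^(j+1))⁻¹ ≤ (1 - t)⁻¹ := by
      apply inv_anti₀ (by linarith)
      have h1' : t ^ (j+1) ≤ t := pow_le_of_le_one ht0.le ht1.le (Nat.succ_ne_zero j)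
      linarith
    have e2 : (t^(j+1))^2 ≤ t^(j+1) * 1 := by
      rw [sq]
      exact mul_le_mul_of_nonneg_left (pow_le_one₀ ht0.le ht1.le) (by positivity)
    nlinarith [pow_pos ht0 (j+1), inv_nonneg.mpr (show (0:ℝ) ≤ 1 - t by linarith)]
  have hLr : Summable (fun j : ℕ ↦ Real.log (1 / (1 - t ^ (j+1)))) := stmt19_sumLr t ht0 ht1
  -- product representations
  have hprodC : HasProd (fun j : ℕ ↦ 1 / (1 - w ^ (j+1)))
      (Complex.exp (∑' j : ℕ, Complex.log (1 / (1 - w ^ (j+1))))) := by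
    refine (hLc.hasSum.cexp).congr_fun (fun j ↦ ?_)
    exact (Complex.exp_log (by
      simp only [ne_eq, one_div, inv_eq_zero]
      exact hwj1 j)).symm
  have hGFC : ‖partitionGFC w‖
      = Real.exp (∑' j : ℕ, (Complex.log (1 / (1 - w ^ (j+1)))).re) := by
    rw [partitionGFC, hprodC.tprod_eq, Complex.norm_exp, Complex.re_tsum hLc]
  have hprodR : HasProd (fun j : ℕ ↦ 1 / (1 - t ^ (j+1)))
      (Real.exp (∑' j : ℕ, Real.log (1 / (1 - t ^ (j+1))))) := by
    refine (hLr.hasSum.rexp).congr_fun (fun j ↦ ?_)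
    exact (Real.exp_log (one_div_pos.mpr (hb j))).symm
  have hGF : partitionGF t = Real.exp (∑' j : ℕ, Real.log (1 / (1 - t ^ (j+1)))) := by
    rw [partitionGF, hprodR.tprod_eq]
  -- geometric sums
  have hgeomW : HasSum (fun j : ℕ ↦ w ^ (j+1)) (w * (1 - w)⁻¹) := by
    refine ((hasSum_geometric_of_norm_lt_one hw1).mul_left w).congr_fun (fun j ↦ ?_)
    rw [pow_succ]
    ring
  have hgeomT : HasSum (fun j : ℕ ↦ t ^ (j+1)) (t * (1 - t)⁻¹) := by
    refine ((hasSum_geometric_of_norm_lt_one (by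
      rw [Real.norm_eq_abs, abs_of_nonneg ht0.le]; exact ht1)).mul_left t).congr_fun
      (fun j ↦ ?_)
    rw [pow_succ]
    ring
  have hS : HasSum (fun j : ℕ ↦ t^(j+1) * (1 - Real.cos (((j:ℝ)+1) * y)))
      (t * (1 - t)⁻¹ - (w * (1 - w)⁻¹).re) := by
    refine (hgeomT.sub (Complex.hasSum_re hgeomW)).congr_fun (fun j ↦ ?_)
    rw [hwre j]
    ring
  -- closed form of the real part
  set K : ℝ := 1 - 2 * t * Real.cos y + t^2 with hK_def
  have hKpos : 0 < K := by nlinarith [Real.cos_le_one y]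
  have hre_closed : (w * (1 - w)⁻¹).re = (t * Real.cos y - t^2) / K := by
    rw [← div_eq_mul_inv, Complex.div_re]
    have h1re : (1 - w).re = 1 - t * Real.cos y := by
      simp [Complex.sub_re, hware]
    have h1im : (1 - w).im = -(t * Real.sin y) := by
      simp [Complex.sub_im, hwaim]
    have hnsq : Complex.normSq (1 - w) = K := by
      rw [Complex.normSq_apply, h1re, h1im, hK_def]
      nlinarith [Real.sin_sq_add_cos_sq y]
    rw [hnsq, hware, hwaim, h1re, h1im]
    field_simp
    nlinarith [Real.sin_sq_add_cos_sq y]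
  -- per-factor comparison
  have hfac : ∀ j : ℕ, (Complex.log (1 / (1 - w ^ (j+1)))).re ≤
      Real.log (1 / (1 - t ^ (j+1))) - t^(j+1) * (1 - Real.cos (((j:ℝ)+1) * y)) := by
    intro j
    have h := stmt19_factor_log (t^(j+1)) (((j:ℝ)+1) * y) (by positivity)
      (lt_of_le_of_lt (pow_le_of_le_one ht0.le ht1.le (Nat.succ_ne_zero j)) ht1)
    rw [← hwj j] at h
    have hL : (Complex.log (1 / (1 - w ^ (j+1)))).re
        = -Real.log ‖1 - w ^ (j+1)‖ := by
      rw [Complex.log_re, norm_div, norm_one, one_div, Real.log_inv]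
    have hR : Real.log (1 / (1 - t ^ (j+1))) = -Real.log (1 - t ^ (j+1)) := by
      rw [one_div, Real.log_inv]
    rw [hL, hR]
    linarith
  have hLcre : Summable (fun j : ℕ ↦ (Complex.log (1 / (1 - w ^ (j+1)))).re) :=
    (Complex.hasSum_re hLc.hasSum).summable
  -- sum comparison
  have hsum_le : (∑' j : ℕ, (Complex.log (1 / (1 - w ^ (j+1)))).re) ≤
      (∑' j : ℕ, Real.log (1 / (1 - t ^ (j+1)))) -
        (t * (1 - t)⁻¹ - (w * (1 - w)⁻¹).re) := by
    have h1 := Summable.tsum_le_tsum hfac hLcre (hLr.sub hS.summable)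
    rw [Summable.tsum_sub hLr hS.summable, hS.tsum_eq] at h1
    exact h1
  -- final chain
  rw [hGFC, hGF, ← Real.exp_sub]
  apply Real.exp_le_exp.mpr
  have hfin := stmt19_alg t a y ht0 ht1 ha0 ha1 hy1 hy2
  rw [← hK_def] at hfin
  rw [show -(2 * t * (t + 1)) / ((1 - t) * (Real.pi ^ 2 / a ^ 2 + 4 * t))
      = -((2 * t * (t + 1)) / ((1 - t) * (Real.pi ^ 2 / a ^ 2 + 4 * t))) from by ring]
  rw [hre_closed] at hsum_le
  linarith
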